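/- Let G be a strongly connected digraph with a fixed start vertex s, and let e=(u,v) be a bridge of the flow graph G_s that is canceled by the insertion of an edge (x,y) (i.e., e is not a bridge of (G+(x,y))_s). Then (i) v dominates y in G_s, and (ii) y and v are strongly connected in the induced subgraph G[D(v)], i.e., y lies in the same e-dominated component as v. -/

import Mathlib

/-!  Basic notions for finite directed graphs given by an edge set `E : Set (V × V)`. -/

variable {V : Type*}

/-- A path from `u` to `v`: a nonempty list of vertices starting at `u`, ending at `v`,
in which every pair of consecutive vertices is an edge. -/
def IsPath (E : Set (V × V)) (u v : V) (p : List V) : Prop :=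
  p.Chain' (fun a b => (a, b) ∈ E) ∧ p.head? = some u ∧ p.getLast? = some v

/-- `v` is reachable from `u` by a path. -/
def Reach (E : Set (V × V)) (u v : V) : Prop := ∃ p, IsPath E u v p

/-- Every vertex reaches every other vertex. -/
def StronglyConnected (E : Set (V × V)) : Prop := ∀ u v, Reach E u v

/-- An edge `e` is a strong bridge if its removal destroys strong connectivity. -/
def StrongBridge (E : Set (V × V)) (e : V × V) : Prop :=
  e ∈ E ∧ ¬ StronglyConnected (E \ {e})

/-- `u` dominates `v` in the flow graph with start vertex `s`:
every path from `s` to `v` contains `u`. -/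
def Dominates (E : Set (V × V)) (s u v : V) : Prop :=
  ∀ p, IsPath E s v p → u ∈ p

/-- An edge `e = (e.1, e.2)` is a bridge of the flow graph `G_s`:
every path from `s` to `e.2` contains the edge `e`. -/
def FlowBridge (E : Set (V × V)) (s : V) (e : V × V) : Prop :=
  e ∈ E ∧ ∀ p, IsPath E s e.2 p → [e.1, e.2] <:+: p

/-- The reverse digraph: all edges reversed. -/
def rev (E : Set (V × V)) : Set (V × V) := {e | (e.2, e.1) ∈ E}

/-- `D(v)`: the set of vertices dominated by `v` in `G_s`. -/
def Dset (E : Set (V × V)) (s v : V) : Set V := {w | Dominates E s v w}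

/-- Reachability inside the induced subgraph `G[S]`: a path all of whose vertices lie in `S`. -/
def ReachableIn (E : Set (V × V)) (S : Set V) (u v : V) : Prop :=
  ∃ p, IsPath E u v p ∧ ∀ w ∈ p, w ∈ S

/-- `C` is a strongly connected component of the induced subgraph `G[S]`. -/
def SCCIn (E : Set (V × V)) (S : Set V) (C : Set V) : Prop :=
  C.Nonempty ∧ C ⊆ S ∧
  (∀ u ∈ C, ∀ v ∈ C, ReachableIn E S u v) ∧
  (∀ v ∈ S, ∀ u ∈ C, ReachableIn E S u v → ReachableIn E S v u → v ∈ C)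

/-- A bridge-dominated component: an SCC of `G[D(v)]` for some bridge `(u,v)` of `G_s`. -/
def BridgeDomComponent (E : Set (V × V)) (s : V) (C : Set V) : Prop :=
  ∃ u v, FlowBridge E s (u, v) ∧ SCCIn E (Dset E s v) C

/-- The set of edges used by a path `p`. -/
def pathEdges (p : List V) : Set (V × V) := {e | [e.1, e.2] <:+: p}

/-- `u` and `v` are `2`-edge-connected: there are two edge-disjoint paths from `u` to `v`
and two edge-disjoint paths from `v` to `u`. -/
def TwoEdgeConnected (E : Set (V × V)) (u v : V) : Prop :=
  (∃ p q, IsPath E u v p ∧ IsPath E u v q ∧ pathEdges p ∩ pathEdges q = ∅) ∧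
  (∃ p q, IsPath E v u p ∧ IsPath E v u q ∧ pathEdges p ∩ pathEdges q = ∅)

/-- `u` is the immediate dominator of `v` in `G_s`: a proper dominator of `v`
dominated by every proper dominator of `v`. -/
def ImmDom (E : Set (V × V)) (s u v : V) : Prop :=
  Dominates E s u v ∧ u ≠ v ∧
  ∀ w, Dominates E s w v → w ≠ v → Dominates E s w u

/-- `depth v = |Dom(v)|`, the number of dominators of `v` in `G_s`. -/
noncomputable def depth (E : Set (V × V)) (s v : V) : ℕ :=
  {u | Dominates E s u v}.ncard

/-- `z` is the nearest common ancestor of `x` and `y` in the dominator tree of `G_s`: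
a common dominator of `x` and `y` dominated by every common dominator. -/
def IsNCA (E : Set (V × V)) (s x y z : V) : Prop :=
  Dominates E s z x ∧ Dominates E s z y ∧
  ∀ w, Dominates E s w x → Dominates E s w y → Dominates E s w z

/-- `r` is the bridge-decomposition root of `v` in `G_s`: the deepest dominator `r`
of `v` such that `r = s` or `(d(r), r)` is a bridge of `G_s`. -/
def IsBDRoot (E : Set (V × V)) (s v r : V) : Prop :=
  Dominates E s r v ∧
  (r = s ∨ ∃ u, ImmDom E s u r ∧ FlowBridge E s (u, r)) ∧
  ∀ r', Dominates E s r' v →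
    (r' = s ∨ ∃ u', ImmDom E s u' r' ∧ FlowBridge E s (u', r')) →
    Dominates E s r' r


section Aux
variable {V : Type*}

lemma myMemOfLast {p : List V} {a : V} (h : p.getLast? = some a) : a ∈ p :=
  List.mem_of_mem_getLast? (by rw [h]; rfl)

lemma myChainMono {R R' : V → V → Prop} :
    ∀ (p : List V), (∀ a b, [a, b] <:+: p → R a b → R' a b) → p.Chain' R → p.Chain' R'
  | [], _, _ => List.isChain_nil
  | [_], _, _ => List.isChain_singleton _
  | a :: b :: t, h, hc => by
      unfold List.Chain' at hc ⊢
      rw [List.isChain_cons_cons] at hc ⊢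
      exact ⟨h a b ⟨[], t, rfl⟩ hc.1,
        myChainMono (b :: t)
          (fun c d hcd => h c d (hcd.trans (List.infix_cons (List.infix_refl _)))) hc.2⟩

lemma mySuffixPath {E : Set (V × V)} {a b w : V} {p t : List V}
    (hp : IsPath E a b p) (h : (w :: t) <:+ p) : IsPath E w b (w :: t) := by
  obtain ⟨pre, rfl⟩ := h
  refine ⟨(List.isChain_append.mp hp.1).2.1, rfl, ?_⟩
  have h2 := hp.2.2
  rw [List.getLast?_append, List.getLast?_cons] at h2
  have h3 : some (t.getLast?.getD w) = some b := h2
  rw [List.getLast?_cons]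
  exact h3

lemma myJoin {E : Set (V × V)} {a w b : V} {q r : List V}
    (hq : IsPath E a w q) (hr : IsPath E w b r) : IsPath E a b (q ++ r.tail) := by
  obtain ⟨hcr, hhr, hlr⟩ := hr
  obtain ⟨hcq, hhq, hlq⟩ := hq
  cases r with
  | nil => simp at hhr
  | cons w0 t =>
    have hw0 : w0 = w := by simpa using hhr
    subst hw0
    cases t with
    | nil =>
      have hb : w0 = b := by simpa using hlr
      refine ⟨by simpa using hcq, by simpa using hhq, ?_⟩
      simp only [List.tail_cons, List.append_nil]
      rw [hlq, hb]
    | cons c t' =>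
      refine ⟨?_, ?_, ?_⟩
      · rw [show ((w0 :: c :: t').tail) = c :: t' from rfl]
        unfold List.Chain'
        rw [List.isChain_append]
        refine ⟨hcq, (List.isChain_cons_cons.mp hcr).2, ?_⟩
        intro p1 hp1 p2 hp2
        rw [hlq] at hp1
        simp only [Option.mem_def, Option.some.injEq] at hp1
        simp only [List.head?_cons, Option.mem_def, Option.some.injEq] at hp2
        rw [← hp1, ← hp2]
        exact (List.isChain_cons_cons.mp hcr).1
      · rw [List.head?_append, hhq]; rfl
      · rw [show ((w0 :: c :: t').tail) = c :: t' from rfl, List.getLast?_append,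
          ← List.getLast?_cons_cons (a := w0), hlr]
        rfl

lemma myTwoInfixAppend :
    ∀ (l₁ : List V) {l₂ : List V} {a b : V}, [a, b] <:+: l₁ ++ l₂ →
      [a, b] <:+: l₁ ∨ [a, b] <:+: l₂ ∨ (l₁.getLast? = some a ∧ l₂.head? = some b)
  | [], _, _, _, h => Or.inr (Or.inl (by simpa using h))
  | c :: l, l₂, a, b, h => by
      rcases List.infix_cons_iff.mp h with hpre | htl
      · obtain ⟨t, ht⟩ := hpre
        have hac : a = c := by injection ht
        have hrest : b :: t = l ++ l₂ := by injection ht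
        match l, hrest with
        | [], hrest =>
          subst hac
          rw [List.nil_append] at hrest
          exact Or.inr (Or.inr ⟨rfl, by rw [← hrest]; rfl⟩)
        | d :: l', hrest =>
          have hbd : b = d := by injection hrest
          subst hac; subst hbd
          exact Or.inl ⟨[], l', rfl⟩
      · rcases myTwoInfixAppend l htl with h1 | h2 | ⟨h3, h4⟩
        · exact Or.inl (List.infix_cons h1)
        · exact Or.inr (Or.inl h2)
        · refine Or.inr (Or.inr ⟨?_, h4⟩)
          have hl : l ≠ [] := by rintro rfl; simp at h3
          match l, h3, hl with
          | e :: l0, h3, _ => rw [List.getLast?_cons_cons]; exact h3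

lemma mySuffixLast {p : List V} {w : V} (h : w ∈ p) : ∃ t, (w :: t) <:+ p ∧ w ∉ t := by
  induction p with
  | nil => cases h
  | cons c p ih =>
    by_cases hw : w ∈ p
    · obtain ⟨t, ht, hnt⟩ := ih hw
      exact ⟨t, ht.trans (List.suffix_cons c p), hnt⟩
    · have hwc : w = c := (List.mem_cons.mp h).resolve_right hw
      exact ⟨p, hwc ▸ List.suffix_refl _, hw⟩

lemma mySuffixLastEdge : ∀ {p : List V} {x y : V}, [x, y] <:+: p →
    ∃ t, (x :: y :: t) <:+ p ∧ ¬ [x, y] <:+: (y :: t) := by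
  intro p
  induction p with
  | nil => intro x y h; rw [List.infix_nil] at h; cases h
  | cons c p ih =>
    intro x y h
    by_cases h' : [x, y] <:+: p
    · obtain ⟨t, ht, hn⟩ := ih h'
      exact ⟨t, ht.trans (List.suffix_cons c p), hn⟩
    · rcases List.infix_cons_iff.mp h with hpre | htl
      · obtain ⟨t, ht⟩ := hpre
        have hxc : x = c := by injection ht
        have hrest : y :: t = p := by injection ht
        subst hxc
        refine ⟨t, by rw [hrest], ?_⟩
        rw [hrest]; exact h'
      · exact absurd htl h'

end Aux

/-- if a bridge `(u,v)` of `G_s` is canceled by the insertion of `(x,y)`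
then `v` dominates `y` in `G_s` and `y` is in the same `e`-dominated component as `v`,
i.e. `y` and `v` are strongly connected in `G[D(v)]`. -/
theorem stmt7 {V : Type*} (E : Set (V × V)) (s u v x y : V)
    (hSC : StronglyConnected E)
    (hbr : FlowBridge E s (u, v))
    (hcanc : ¬ FlowBridge (insert (x, y) E) s (u, v)) :
    Dominates E s v y ∧
    ReachableIn E (Dset E s v) y v ∧ ReachableIn E (Dset E s v) v y := by
  classical
  by_cases hxyE : (x, y) ∈ E
  · rw [Set.insert_eq_of_mem hxyE] at hcanc
    exact absurd hbr hcanc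
  have hmem : ((u, v) : V × V) ∈ insert (x, y) E := Set.mem_insert_of_mem _ hbr.1
  have hex : ∃ p, IsPath (insert (x, y) E) s v p ∧ ¬ [u, v] <:+: p := by
    by_contra hno
    push_neg at hno
    exact hcanc ⟨hmem, fun p hp => hno p hp⟩
  obtain ⟨p, hp, hpuv⟩ := hex
  have hxyp : [x, y] <:+: p := by
    by_contra hxyp
    have hpE : IsPath E s v p := by
      refine ⟨myChainMono p ?_ hp.1, hp.2.1, hp.2.2⟩
      intro a b hab hmem'
      rcases Set.mem_insert_iff.mp hmem' with h1 | h2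
      · exfalso
        apply hxyp
        rw [show a = x from congrArg Prod.fst h1, show b = y from congrArg Prod.snd h1] at hab
        exact hab
      · exact h2
    exact hpuv (hbr.2 p hpE)
  obtain ⟨t0, hsuf0, hnotxy⟩ := mySuffixLastEdge hxyp
  have hrsuf : (y :: t0) <:+ p := (List.suffix_cons x (y :: t0)).trans hsuf0
  have hr' : IsPath (insert (x, y) E) y v (y :: t0) := mySuffixPath hp hrsuf
  have hr : IsPath E y v (y :: t0) := by
    refine ⟨myChainMono (y :: t0) ?_ hr'.1, hr'.2.1, hr'.2.2⟩
    intro a b hab hmem'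
    rcases Set.mem_insert_iff.mp hmem' with h1 | h2
    · exfalso
      apply hnotxy
      rw [show a = x from congrArg Prod.fst h1, show b = y from congrArg Prod.snd h1] at hab
      exact hab
    · exact h2
  have hruv : ¬ [u, v] <:+: (y :: t0) := fun h => hpuv (h.trans hrsuf.isInfix)
  have hdomR : ∀ w0 ∈ (y :: t0), Dominates E s v w0 := by
    intro w0 hw0 q hq
    obtain ⟨t2, hsuf2, -⟩ := mySuffixLast hw0
    have hpath2 : IsPath E w0 v (w0 :: t2) := mySuffixPath hr hsuf2
    have hjoin : IsPath E s v (q ++ (w0 :: t2).tail) := myJoin hq hpath2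
    have hbig := hbr.2 _ hjoin
    rcases myTwoInfixAppend q hbig with h1 | h2 | ⟨h3, h4⟩
    · exact h1.subset (by simp)
    · exact absurd ((h2.trans (List.tail_suffix (w0 :: t2)).isInfix).trans hsuf2.isInfix) hruv
    · exfalso
      have huw0 : u = w0 := by
        rw [hq.2.2] at h3
        simpa using h3.symm
      cases t2 with
      | nil => simp at h4
      | cons c t2' =>
        have hcv : c = v := by simpa using h4
        apply hruv
        refine List.IsInfix.trans ?_ hsuf2.isInfix
        rw [huw0, ← hcv]
        exact ⟨[], t2', rfl⟩
  have hdy : Dominates E s v y := hdomR y List.mem_cons_self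
  refine ⟨hdy, ⟨y :: t0, hr, fun w0 hw0 => hdomR w0 hw0⟩, ?_⟩
  obtain ⟨q0, hq0⟩ := hSC s y
  have hvq0 : v ∈ q0 := hdy q0 hq0
  obtain ⟨t, hsuf, hvt⟩ := mySuffixLast hvq0
  have hm : IsPath E v y (v :: t) := mySuffixPath hq0 hsuf
  refine ⟨v :: t, hm, ?_⟩
  intro w0 hw0
  show Dominates E s v w0
  intro q hq
  rcases List.mem_cons.mp hw0 with rfl | hw0t
  · exact myMemOfLast hq.2.2
  · obtain ⟨t2, hsuf2, -⟩ := mySuffixLast hw0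
    rcases List.suffix_cons_iff.mp hsuf2 with heq | hsuf2'
    · injection heq with h1 h2
      exact absurd (h1 ▸ hw0t) hvt
    · have hvt2 : v ∉ t2 := fun hv => hvt (hsuf2'.subset (List.mem_cons_of_mem _ hv))
      have hpath2 : IsPath E w0 y (w0 :: t2) := mySuffixPath hm hsuf2
      have hjoin : IsPath E s y (q ++ (w0 :: t2).tail) := myJoin hq hpath2
      have hvj : v ∈ q ++ (w0 :: t2).tail := hdy _ hjoin
      rcases List.mem_append.mp hvj with h | h
      · exact h
      · exact absurd h hvt2
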